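/- Let N ≥ 1 and let (a_1, …, a_N) ∈ ℝ^N and A, C > 0 satisfy: (1) Σ_{i=1}^N a_i = 0; (2) Σ_{i=1}^N a_i² ≤ C; (3) |a_i| ≤ A for each 1 ≤ i ≤ N. If Z_1, …, Z_N are independent standard real Gaussian random variables, then for every t > 0 one has P(|Σ_{i=1}^N a_i·Z_i²| ≥ t) ≤ 2·(A·t/C + 1)^{C/(2A²)}·exp(−t/(2A)). -/

import Mathlib

open MeasureTheory ProbabilityTheory Real
open scoped NNReal ENNReal


lemma aux_log_ineq {x y : ℝ} (hxy : |x| ≤ y) (hy1 : y < 1) :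
    (-Real.log (1 - x) - x) * y ^ 2 ≤ (-Real.log (1 - y) - y) * x ^ 2 := by
  have hy0 : 0 ≤ y := (abs_nonneg x).trans hxy
  rcases eq_or_lt_of_le hy0 with h0 | hy0
  · have hx : x = 0 := by
      have h := hxy; rw [← h0] at h
      simpa [abs_nonpos_iff] using h
    simp [hx, ← h0]
  have hxabs : |x| < 1 := lt_of_le_of_lt hxy hy1
  have hyabs : |y| < 1 := by rwa [abs_of_nonneg hy0.le]
  have shift : ∀ z : ℝ, |z| < 1 →
      HasSum (fun n : ℕ => z ^ (n + 2) / ((n : ℝ) + 2)) (-Real.log (1 - z) - z) := by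
    intro z hz
    have h := hasSum_pow_div_log_of_abs_lt_one hz
    have key := (hasSum_nat_add_iff (f := fun n : ℕ => z ^ (n + 1) / ((n : ℝ) + 1)) 1
      (g := -Real.log (1 - z) - z)).mpr (by simpa using h)
    have heq : (fun n : ℕ => z ^ (n + 2) / ((n : ℝ) + 2))
        = fun n : ℕ => z ^ ((n + 1) + 1) / ((((n : ℕ) + 1 : ℕ) : ℝ) + 1) := by
      funext n; push_cast; ring_nf
    rw [heq]; exact key
  refine hasSum_le ?_ ((shift x hxabs).mul_right (y ^ 2)) ((shift y hyabs).mul_right (x ^ 2))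
  intro n
  have hd : (0 : ℝ) < (n : ℝ) + 2 := by positivity
  have hnum : x ^ (n + 2) * y ^ 2 ≤ y ^ (n + 2) * x ^ 2 := by
    have h1 : x ^ (n + 2) ≤ |x| ^ n * x ^ 2 := by
      calc x ^ (n + 2) ≤ |x ^ (n + 2)| := le_abs_self _
        _ = |x| ^ (n + 2) := abs_pow x (n + 2)
        _ = |x| ^ n * |x| ^ 2 := pow_add _ _ _
        _ = |x| ^ n * x ^ 2 := by rw [sq_abs]
    have h2 : |x| ^ n ≤ y ^ n := pow_le_pow_left₀ (abs_nonneg x) hxy n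
    calc x ^ (n + 2) * y ^ 2 ≤ (|x| ^ n * x ^ 2) * y ^ 2 :=
          mul_le_mul_of_nonneg_right h1 (sq_nonneg y)
      _ ≤ (y ^ n * x ^ 2) * y ^ 2 := by
          exact mul_le_mul_of_nonneg_right
            (mul_le_mul_of_nonneg_right h2 (sq_nonneg x)) (sq_nonneg y)
      _ = y ^ (n + 2) * x ^ 2 := by ring
  rw [div_mul_eq_mul_div, div_mul_eq_mul_div]
  gcongr


lemma aux_pdf_mul (c : ℝ) (x : ℝ) :
    gaussianPDFReal 0 1 x * Real.exp (c * x ^ 2)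
      = (Real.sqrt (2 * π))⁻¹ * Real.exp (-(1 / 2 - c) * x ^ 2) := by
  simp only [gaussianPDFReal, NNReal.coe_one, mul_one, sub_zero]
  rw [mul_assoc, ← Real.exp_add]
  congr 1
  ring

lemma aux_gauss_integrable {c : ℝ} (hc : c < 1 / 2) :
    Integrable (fun x => Real.exp (c * x ^ 2)) (gaussianReal 0 1) := by
  have hb : 0 < 1 / 2 - c := by linarith
  rw [gaussianReal_of_var_ne_zero 0 one_ne_zero, gaussianPDF_def]
  rw [show (fun x => ENNReal.ofReal (gaussianPDFReal 0 1 x))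
      = (fun x => ((Real.toNNReal (gaussianPDFReal 0 1 x) : ℝ≥0) : ℝ≥0∞)) from rfl]
  rw [integrable_withDensity_iff_integrable_smul
    ((measurable_gaussianPDFReal 0 1).real_toNNReal)]
  have heq : (fun x : ℝ => (Real.toNNReal (gaussianPDFReal 0 1 x) : ℝ≥0) • Real.exp (c * x ^ 2))
      = fun x : ℝ => (Real.sqrt (2 * π))⁻¹ * Real.exp (-(1 / 2 - c) * x ^ 2) := by
    funext x
    rw [NNReal.smul_def, Real.coe_toNNReal _ (gaussianPDFReal_nonneg 0 1 x), smul_eq_mul, aux_pdf_mul]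
  rw [heq]
  exact (integrable_exp_neg_mul_sq hb).const_mul _

lemma aux_gauss_integral {c : ℝ} (hc : c < 1 / 2) :
    ∫ x, Real.exp (c * x ^ 2) ∂(gaussianReal 0 1)
      = Real.exp (-Real.log (1 - 2 * c) / 2) := by
  have hb : 0 < 1 / 2 - c := by linarith
  have hd : 0 < 1 - 2 * c := by linarith
  rw [gaussianReal_of_var_ne_zero 0 one_ne_zero, gaussianPDF_def]
  rw [show (fun x => ENNReal.ofReal (gaussianPDFReal 0 1 x))
      = (fun x => ((Real.toNNReal (gaussianPDFReal 0 1 x) : ℝ≥0) : ℝ≥0∞)) from rfl]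
  rw [integral_withDensity_eq_integral_smul
    ((measurable_gaussianPDFReal 0 1).real_toNNReal)]
  have heq : (fun x : ℝ => (Real.toNNReal (gaussianPDFReal 0 1 x) : ℝ≥0) • Real.exp (c * x ^ 2))
      = fun x : ℝ => (Real.sqrt (2 * π))⁻¹ * Real.exp (-(1 / 2 - c) * x ^ 2) := by
    funext x
    rw [NNReal.smul_def, Real.coe_toNNReal _ (gaussianPDFReal_nonneg 0 1 x), smul_eq_mul, aux_pdf_mul]
  rw [heq, integral_const_mul, integral_gaussian]
  have h2π : (0 : ℝ) < 2 * π := by positivity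
  have h1 : π / (1 / 2 - c) = 2 * π / (1 - 2 * c) := by
    rw [div_eq_div_iff hb.ne' hd.ne']; ring
  rw [h1, Real.sqrt_div h2π.le]
  have h2 : Real.exp (-Real.log (1 - 2 * c) / 2) = (Real.sqrt (1 - 2 * c))⁻¹ := by
    rw [Real.sqrt_eq_rpow, ← Real.rpow_neg hd.le, Real.rpow_def_of_pos hd]
    congr 1
    ring
  rw [h2]
  rw [div_eq_mul_inv, ← mul_assoc, inv_mul_cancel₀ (Real.sqrt_ne_zero'.mpr h2π), one_mul]

lemma one_sided {Ω : Type} [MeasurableSpace Ω]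
    (μ : Measure Ω) [IsProbabilityMeasure μ]
    (N : ℕ) (a : Fin N → ℝ) (A C : ℝ) (hA : 0 < A) (hC : 0 < C)
    (ha1 : ∑ i, a i = 0) (ha2 : ∑ i, a i ^ 2 ≤ C) (ha3 : ∀ i, |a i| ≤ A)
    (Z : Fin N → Ω → ℝ) (hmeas : ∀ i, Measurable (Z i))
    (hindep : iIndepFun Z μ)
    (hgauss : ∀ i, Measure.map (Z i) μ = gaussianReal 0 1)
    (t : ℝ) (ht : 0 < t) :
    μ {ω | t ≤ ∑ i, a i * Z i ω ^ 2} ≤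
      ENNReal.ofReal ((A * t / C + 1) ^ (C / (2 * A ^ 2)) * Real.exp (-(t / (2 * A)))) := by
  have hAtC : 0 < A * t + C := by positivity
  set l : ℝ := t / (2 * (A * t + C)) with hl_def
  have hl : 0 < l := by positivity
  set s : ℝ := 2 * (l * A) with hs_def
  have hs_eq : s = A * t / (A * t + C) := by
    rw [hs_def, hl_def]; field_simp
  have hs0 : 0 < s := by positivity
  have hs1 : s < 1 := by rw [hs_eq, div_lt_one hAtC]; linarith
  have hcs : ∀ i, l * a i < 1 / 2 := by
    intro i
    have h1 : l * a i ≤ l * A := by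
      have := (abs_le.mp (ha3 i)).2
      nlinarith
    have h2 : 2 * (l * A) < 1 := hs_def ▸ hs1
    linarith
  -- the random variables X i = a i * Z i ^ 2
  set X : Fin N → Ω → ℝ := fun i ω => a i * Z i ω ^ 2 with hX
  have hXmeas : ∀ i, Measurable (X i) := fun i => ((hmeas i).pow_const 2).const_mul _
  have hXindep : iIndepFun X μ :=
    hindep.comp (fun i (x : ℝ) => a i * x ^ 2)
      (fun i => (measurable_id.pow_const 2).const_mul _)
  have hint : ∀ i, Integrable (fun ω => Real.exp (l * X i ω)) μ := by
    intro i
    have h1 : Integrable (fun x : ℝ => Real.exp ((l * a i) * x ^ 2)) (gaussianReal 0 1) :=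
      aux_gauss_integrable (hcs i)
    rw [← hgauss i] at h1
    have h2 := (integrable_map_measure h1.aestronglyMeasurable
      (hmeas i).aemeasurable).mp h1
    have : (fun ω => Real.exp (l * X i ω))
        = ((fun x : ℝ => Real.exp ((l * a i) * x ^ 2)) ∘ Z i) := by
      funext ω; simp only [hX, Function.comp_apply]; ring_nf
    rw [this]; exact h2
  have hmgf : ∀ i, mgf (X i) μ l = Real.exp (-Real.log (1 - 2 * (l * a i)) / 2) := by
    intro i
    have hsm : AEStronglyMeasurable (fun x : ℝ => Real.exp ((l * a i) * x ^ 2))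
        (Measure.map (Z i) μ) :=
      (Real.continuous_exp.comp (continuous_const.mul (continuous_pow 2))).aestronglyMeasurable
    calc mgf (X i) μ l = ∫ ω, Real.exp (l * X i ω) ∂μ := rfl
      _ = ∫ ω, Real.exp ((l * a i) * Z i ω ^ 2) ∂μ := by
          congr 1; funext ω; simp only [hX]; ring_nf
      _ = ∫ x, Real.exp ((l * a i) * x ^ 2) ∂(Measure.map (Z i) μ) :=
          (integral_map (hmeas i).aemeasurable hsm).symm
      _ = Real.exp (-Real.log (1 - 2 * (l * a i)) / 2) := by
          rw [hgauss i]; exact aux_gauss_integral (hcs i)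
  -- Chernoff bound
  have hintS : Integrable (fun ω => Real.exp (l * (∑ i, X i) ω)) μ :=
    hXindep.integrable_exp_mul_sum hXmeas (fun i _ => hint i)
  have hcher := measure_ge_le_exp_mul_mgf (X := ∑ i, X i) (μ := μ) (t := l) t hl.le hintS
  rw [hXindep.mgf_sum hXmeas Finset.univ] at hcher
  have hprod : ∏ i, mgf (X i) μ l
      = Real.exp (∑ i, -Real.log (1 - 2 * (l * a i)) / 2) := by
    rw [Real.exp_sum]; exact Finset.prod_congr rfl fun i _ => hmgf i
  rw [hprod] at hcher
  -- bound the exponent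
  have hf0 : 0 ≤ -Real.log (1 - s) - s := by
    have := Real.log_le_sub_one_of_pos (show 0 < 1 - s by linarith)
    linarith
  have hx_le : ∀ i, |2 * (l * a i)| ≤ s := by
    intro i
    rw [hs_def, abs_mul, abs_mul, abs_of_nonneg (by norm_num : (0:ℝ) ≤ 2),
      abs_of_nonneg hl.le]
    have := ha3 i
    nlinarith
  have hsum1 : ∑ i, (-Real.log (1 - 2 * (l * a i)) - 2 * (l * a i)) * s ^ 2
      ≤ ∑ i, (-Real.log (1 - s) - s) * (2 * (l * a i)) ^ 2 :=
    Finset.sum_le_sum fun i _ => aux_log_ineq (hx_le i) hs1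
  have hL : ∑ i, (-Real.log (1 - 2 * (l * a i)) - 2 * (l * a i)) * s ^ 2
      = (∑ i, -Real.log (1 - 2 * (l * a i))) * s ^ 2 := by
    rw [← Finset.sum_mul]
    congr 1
    rw [Finset.sum_sub_distrib]
    have : ∑ i, 2 * (l * a i) = 2 * l * ∑ i, a i := by
      rw [Finset.mul_sum]; exact Finset.sum_congr rfl fun i _ => by ring
    rw [this, ha1, mul_zero, sub_zero]
  have hR : ∑ i, (-Real.log (1 - s) - s) * (2 * (l * a i)) ^ 2
      ≤ (-Real.log (1 - s) - s) * (4 * l ^ 2 * C) := by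
    rw [← Finset.mul_sum]
    apply mul_le_mul_of_nonneg_left _ hf0
    have : ∑ i, (2 * (l * a i)) ^ 2 = 4 * l ^ 2 * ∑ i, a i ^ 2 := by
      rw [Finset.mul_sum]; exact Finset.sum_congr rfl fun i _ => by ring
    rw [this]
    have h4l : (0:ℝ) ≤ 4 * l ^ 2 := by positivity
    nlinarith
  have hs_sq : s ^ 2 = 4 * l ^ 2 * A ^ 2 := by rw [hs_def]; ring
  have hexp_le : (∑ i, -Real.log (1 - 2 * (l * a i)) / 2)
      ≤ C / (2 * A ^ 2) * (-Real.log (1 - s) - s) := by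
    set q := ∑ i, -Real.log (1 - 2 * (l * a i)) with hq_def
    set F := -Real.log (1 - s) - s with hF_def
    have h : q * s ^ 2 ≤ F * (4 * l ^ 2 * C) := hL ▸ hsum1.trans hR
    have h4l : (0:ℝ) < 4 * l ^ 2 := by positivity
    have h' : (q * A ^ 2) * (4 * l ^ 2) ≤ (F * C) * (4 * l ^ 2) := by
      calc (q * A ^ 2) * (4 * l ^ 2) = q * (4 * l ^ 2 * A ^ 2) := by ring
        _ = q * s ^ 2 := by rw [hs_sq]
        _ ≤ F * (4 * l ^ 2 * C) := h
        _ = (F * C) * (4 * l ^ 2) := by ring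
    have hq : q * A ^ 2 ≤ F * C := le_of_mul_le_mul_right h' h4l
    have hsum_div : (∑ i, -Real.log (1 - 2 * (l * a i)) / 2) = q / 2 := by
      rw [hq_def, Finset.sum_div]
    rw [hsum_div]
    rw [div_le_iff₀ (by norm_num : (0:ℝ) < 2)]
    have hA2 : (0:ℝ) < A ^ 2 := by positivity
    rw [show C / (2 * A ^ 2) * F * 2 = (F * C) / A ^ 2 by field_simp]
    rw [le_div_iff₀ hA2]
    exact hq
  -- final numeric bound
  have hlog : -Real.log (1 - s) = Real.log (A * t / C + 1) := by
    have h1ms : 1 - s = C / (A * t + C) := by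
      rw [hs_eq]; field_simp; ring
    rw [h1ms, ← Real.log_inv]
    congr 1
    rw [inv_div]
    field_simp
  have hkey : -(l * t) - C / (2 * A ^ 2) * s = -(t / (2 * A)) := by
    rw [hs_eq, hl_def]; field_simp; ring
  have hfinal : Real.exp (-l * t) * Real.exp (∑ i, -Real.log (1 - 2 * (l * a i)) / 2)
      ≤ (A * t / C + 1) ^ (C / (2 * A ^ 2)) * Real.exp (-(t / (2 * A))) := by
    rw [← Real.exp_add, Real.rpow_def_of_pos (by positivity), ← Real.exp_add]
    apply Real.exp_le_exp.mpr
    calc -l * t + (∑ i, -Real.log (1 - 2 * (l * a i)) / 2)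
        ≤ -l * t + C / (2 * A ^ 2) * (-Real.log (1 - s) - s) := by linarith [hexp_le]
      _ = C / (2 * A ^ 2) * (-Real.log (1 - s)) + (-(l * t) - C / (2 * A ^ 2) * s) := by ring
      _ = Real.log (A * t / C + 1) * (C / (2 * A ^ 2)) + -(t / (2 * A)) := by
          rw [hlog, hkey]; ring
  -- assemble
  have hset : {ω | t ≤ ∑ i, a i * Z i ω ^ 2} = {ω | t ≤ (∑ i, X i) ω} := by
    ext ω; simp [hX, Finset.sum_apply]
  rw [hset]
  rw [← ENNReal.ofReal_toReal (measure_ne_top μ _)]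
  exact ENNReal.ofReal_le_ofReal (hcher.trans hfinal)

/-- Large deviations estimate for weighted sums of independent `χ²₁` random variables
(squares of standard Gaussians), with zero-sum weights. -/
theorem stmt_8 {Ω : Type} [MeasurableSpace Ω]
    (μ : Measure Ω) [IsProbabilityMeasure μ]
    (N : ℕ) (hN : 1 ≤ N)
    (a : Fin N → ℝ) (A C : ℝ) (hA : 0 < A) (hC : 0 < C)
    (ha1 : ∑ i, a i = 0)
    (ha2 : ∑ i, a i ^ 2 ≤ C)
    (ha3 : ∀ i, |a i| ≤ A)
    (Z : Fin N → Ω → ℝ)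
    (hmeas : ∀ i, Measurable (Z i))
    (hindep : iIndepFun Z μ)
    (hgauss : ∀ i, Measure.map (Z i) μ = gaussianReal 0 1)
    (t : ℝ) (ht : 0 < t) :
    μ {ω | t ≤ |∑ i, a i * Z i ω ^ 2|} ≤
      ENNReal.ofReal (2 * (A * t / C + 1) ^ (C / (2 * A ^ 2)) * Real.exp (-(t / (2 * A)))) := by
  have h1 := one_sided μ N a A C hA hC ha1 ha2 ha3 Z hmeas hindep hgauss t ht
  have h2 := one_sided μ N (fun i => -a i) A C hA hC
    (by simp [ha1]) (by simpa [neg_sq] using ha2)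
    (fun i => by simpa using ha3 i) Z hmeas hindep hgauss t ht
  have hb : 0 ≤ (A * t / C + 1) ^ (C / (2 * A ^ 2)) * Real.exp (-(t / (2 * A))) := by
    positivity
  calc μ {ω | t ≤ |∑ i, a i * Z i ω ^ 2|}
      ≤ μ ({ω | t ≤ ∑ i, a i * Z i ω ^ 2} ∪ {ω | t ≤ ∑ i, -a i * Z i ω ^ 2}) := by
        apply measure_mono
        intro ω hω
        rcases le_abs.mp (Set.mem_setOf_eq ▸ hω) with h | h
        · exact Or.inl h
        · refine Or.inr ?_
          have : ∑ i, -a i * Z i ω ^ 2 = -∑ i, a i * Z i ω ^ 2 := by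
            rw [← Finset.sum_neg_distrib]
            exact Finset.sum_congr rfl fun i _ => by ring
          rw [Set.mem_setOf_eq, this]
          exact h
    _ ≤ μ {ω | t ≤ ∑ i, a i * Z i ω ^ 2} + μ {ω | t ≤ ∑ i, -a i * Z i ω ^ 2} :=
        measure_union_le _ _
    _ ≤ ENNReal.ofReal ((A * t / C + 1) ^ (C / (2 * A ^ 2)) * Real.exp (-(t / (2 * A))))
        + ENNReal.ofReal ((A * t / C + 1) ^ (C / (2 * A ^ 2)) * Real.exp (-(t / (2 * A)))) :=
        add_le_add h1 h2
    _ = ENNReal.ofReal (2 * (A * t / C + 1) ^ (C / (2 * A ^ 2)) * Real.exp (-(t / (2 * A)))) := by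
        rw [← ENNReal.ofReal_add hb hb]
        congr 1
        ring
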